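/- Let P = t + xi + yj + zk and Q = s + ui + vj + wk be quaternions. The determinant of the real 4×4 matrix representing the ℝ-linear map X ↦ PX + XQ equals (t+s)⁴ + 2(t+s)²(x²+y²+z²+u²+v²+w²) + (x²+y²+z² − u²−v²−w²)², and in particular this determinant is nonnegative. -/

import Mathlib

open Quaternion QuaternionAlgebra Matrix

set_option maxHeartbeats 4000000 in
theorem stmt_4 (t x y z s u v w : ℝ) :
    LinearMap.det
        (LinearMap.mulLeft ℝ (⟨t, x, y, z⟩ : Quaternion ℝ) +
          LinearMap.mulRight ℝ (⟨s, u, v, w⟩ : Quaternion ℝ)) =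
      (t + s) ^ 4 + 2 * (t + s) ^ 2 * (x ^ 2 + y ^ 2 + z ^ 2 + u ^ 2 + v ^ 2 + w ^ 2) +
        (x ^ 2 + y ^ 2 + z ^ 2 - u ^ 2 - v ^ 2 - w ^ 2) ^ 2 ∧
      0 ≤ LinearMap.det
        (LinearMap.mulLeft ℝ (⟨t, x, y, z⟩ : Quaternion ℝ) +
          LinearMap.mulRight ℝ (⟨s, u, v, w⟩ : Quaternion ℝ)) := by
  have key : LinearMap.det
        (LinearMap.mulLeft ℝ (⟨t, x, y, z⟩ : Quaternion ℝ) +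
          LinearMap.mulRight ℝ (⟨s, u, v, w⟩ : Quaternion ℝ)) =
      (t + s) ^ 4 + 2 * (t + s) ^ 2 * (x ^ 2 + y ^ 2 + z ^ 2 + u ^ 2 + v ^ 2 + w ^ 2) +
        (x ^ 2 + y ^ 2 + z ^ 2 - u ^ 2 - v ^ 2 - w ^ 2) ^ 2 := by
    rw [← LinearMap.det_toMatrix (basisOneIJK (-1 : ℝ) (0 : ℝ) (-1 : ℝ))]
    have hM : LinearMap.toMatrix (basisOneIJK (-1:ℝ) (0:ℝ) (-1:ℝ)) (basisOneIJK (-1:ℝ) (0:ℝ) (-1:ℝ))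
        (LinearMap.mulLeft ℝ (⟨t, x, y, z⟩ : Quaternion ℝ) +
          LinearMap.mulRight ℝ (⟨s, u, v, w⟩ : Quaternion ℝ)) =
        !![t+s, -(x+u), -(y+v), -(z+w);
           x+u, t+s, w-z, y-v;
           y+v, z-w, t+s, u-x;
           z+w, v-y, x-u, t+s] := by
      ext i j
      fin_cases i <;> fin_cases j <;>
        simp [LinearMap.toMatrix_apply, basisOneIJK, Module.Basis.ofEquivFun,
          Quaternion.re_mul, Quaternion.imI_mul,
          Quaternion.imJ_mul, Quaternion.imK_mul] <;> ring_nf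
    rw [hM]
    have hc : (Fin.castSucc 2 : Fin 4) = 2 := rfl
    rw [Matrix.det_succ_row_zero]
    simp [Fin.sum_univ_succ, Matrix.det_fin_three, Fin.succAbove]
    ring
  refine ⟨key, key ▸ by positivity⟩
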